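/- Let p be a prime with p ≡ 7 (mod 8). Over the ring F₄+uF₄, the quadratic residue circulant matrix Q_p(u, 1+ω, ω+uω) satisfies Q_p(u, 1+ω, ω+uω) · Q_p(u, 1+ω, ω+uω)^T = I_p. -/

import Mathlib

noncomputable section

open Matrix
open scoped Classical

/-- The quadratic residue circulant matrix `Q_p(a,b,c)`: the `p × p` circulant matrix
(indexed by `ZMod p`) whose `(i,j)` entry is `a` if `j - i = 0`, `b` if `j - i` is a
nonzero quadratic residue modulo `p`, and `c` if `j - i` is a quadratic non-residue. -/
def Qcirc {R : Type*} [CommRing R] (p : ℕ) (a b c : R) :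
    Matrix (ZMod p) (ZMod p) R :=
  Matrix.of fun i j =>
    if j - i = 0 then a else if IsSquare (j - i) then b else c

/-- The field `F₄` with four elements. -/
abbrev F4 := GaloisField 2 2

/-- The ring `F₄ + u F₄ = F₄[u]/(u²)`. -/
abbrev R4 := DualNumber F4

namespace QcircAux

open Finset DualNumber

variable {p : ℕ} [NeZero p] [Fact (Nat.Prime p)]

lemma sum_qc_shift (hp2 : p ≠ 2) (d : ZMod p) (hd : d ≠ 0) :
    ∑ x : ZMod p, quadraticChar (ZMod p) x * quadraticChar (ZMod p) (x - d) = -1 := by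
  set χ := quadraticChar (ZMod p) with hχ
  have hF : ringChar (ZMod p) ≠ 2 := by rw [ZMod.ringChar_zmod_n]; exact hp2
  have step : ∀ x : ZMod p, χ x * χ (x - d) = if x = 0 then 0 else χ (1 - d * x⁻¹) := by
    intro x
    split_ifs with h
    · simp [h, hχ]
    · have hx : x - d = x * (1 - d * x⁻¹) := by
        field_simp
      rw [hx, _root_.map_mul, ← mul_assoc, ← sq, quadraticChar_sq_one h, one_mul]
  rw [Finset.sum_congr rfl fun x _ => step x]
  rw [← Finset.add_sum_erase _ _ (mem_univ (0 : ZMod p))]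
  rw [if_pos rfl, zero_add]
  have : ∑ x ∈ univ.erase (0 : ZMod p), (if x = 0 then 0 else χ (1 - d * x⁻¹))
      = ∑ y ∈ univ.erase (1 : ZMod p), χ y := by
    refine Finset.sum_nbij' (fun x => 1 - d * x⁻¹) (fun y => d * (1 - y)⁻¹) ?_ ?_ ?_ ?_ ?_
    · intro a ha
      rw [mem_erase] at ha ⊢
      refine ⟨?_, mem_univ _⟩
      intro hcon
      have : d * a⁻¹ = 0 := by linear_combination -hcon
      rcases mul_eq_zero.mp this with h | h
      · exact hd h
      · exact ha.1 (inv_eq_zero.mp h)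
    · intro y hy
      rw [mem_erase] at hy ⊢
      refine ⟨?_, mem_univ _⟩
      intro hcon
      rcases mul_eq_zero.mp hcon with h | h
      · exact hd h
      · exact sub_ne_zero_of_ne (Ne.symm hy.1) (by simpa [inv_eq_zero, sub_eq_zero] using h)
    · intro a ha
      rw [mem_erase] at ha
      show d * (1 - (1 - d * a⁻¹))⁻¹ = a
      have h1 : (1:ZMod p) - (1 - d * a⁻¹) = d * a⁻¹ := by ring
      rw [h1, _root_.mul_inv_rev, inv_inv]
      field_simp
    · intro y hy
      rw [mem_erase] at hy
      show 1 - d * (d * (1 - y)⁻¹)⁻¹ = y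
      have h1 : (1:ZMod p) - y ≠ 0 := sub_ne_zero_of_ne (Ne.symm hy.1)
      rw [_root_.mul_inv_rev, inv_inv]
      field_simp
      ring
    · intro a ha
      rw [mem_erase] at ha
      rw [if_neg ha.1]
  rw [this]
  have h0 : χ 1 + ∑ y ∈ univ.erase (1 : ZMod p), χ y = ∑ y : ZMod p, χ y :=
    Finset.add_sum_erase _ _ (mem_univ _)
  rw [quadraticChar_sum_zero hF] at h0
  have : χ 1 = 1 := by simp [hχ]
  linarith [h0, this]

lemma qc_neg_one (h4 : p % 4 = 3) : quadraticChar (ZMod p) (-1) = -1 := by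
  rw [quadraticChar_neg_one_iff_not_isSquare, ZMod.exists_sq_eq_neg_one_iff]
  simp [h4]

lemma neg_isSquare_iff (h4 : p % 4 = 3) {x : ZMod p} (hx : x ≠ 0) :
    IsSquare (-x) ↔ ¬ IsSquare x := by
  have hnx : -x ≠ 0 := neg_ne_zero.mpr hx
  rw [← quadraticChar_one_iff_isSquare hnx, show -x = -1 * x by ring, _root_.map_mul,
    qc_neg_one h4]
  rw [← quadraticChar_neg_one_iff_not_isSquare]
  constructor
  · intro h; linarith
  · intro h; rw [h]; ring

lemma card_NPP (h7 : p % 8 = 7) (d : ZMod p) (hd : d ≠ 0) :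
    (4:ℤ) * (((univ.erase (0:ZMod p)).erase d).filter
      (fun m => IsSquare m ∧ IsSquare (m - d))).card = p - 3 := by
  have hp2 : p ≠ 2 := by omega
  have h4 : p % 4 = 3 := by omega
  have hF : ringChar (ZMod p) ≠ 2 := by rw [ZMod.ringChar_zmod_n]; exact hp2
  set χ := quadraticChar (ZMod p) with hχ
  set A := ∑ x : ZMod p, (1 + χ x) * (1 + χ (x - d)) with hA
  have hshift : ∑ x : ZMod p, χ (x - d) = 0 := by
    have h := Fintype.sum_equiv (Equiv.subRight d) (fun x => χ (x - d)) (fun y => χ y)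
      (fun x => rfl)
    rw [h]
    exact quadraticChar_sum_zero hF
  have hA1 : A = (p : ℤ) - 1 := by
    have : A = ∑ x : ZMod p, (1 + χ x + χ (x - d) + χ x * χ (x - d)) := by
      apply Finset.sum_congr rfl; intro x _; ring
    rw [this, Finset.sum_add_distrib, Finset.sum_add_distrib, Finset.sum_add_distrib,
      Finset.sum_const, quadraticChar_sum_zero hF, hshift, sum_qc_shift hp2 d hd]
    simp [ZMod.card]
    ring
  have hA2 : A = 2 + 4 * (((univ.erase (0:ZMod p)).erase d).filter
      (fun m => IsSquare m ∧ IsSquare (m - d))).card := by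
    rw [hA, ← Finset.add_sum_erase _ _ (mem_univ (0 : ZMod p)),
      ← Finset.add_sum_erase _ _ (mem_erase.mpr ⟨hd, mem_univ d⟩)]
    have e0 : (1 + χ 0) * (1 + χ (0 - d)) = 1 + χ (-d) := by
      rw [hχ, quadraticChar_zero]; ring_nf
    have ed : (1 + χ d) * (1 + χ (d - d)) = 1 + χ d := by
      rw [sub_self, hχ, quadraticChar_zero]; ring
    have hnegd : χ (-d) = - χ d := by
      rw [show -d = -1 * d by ring, _root_.map_mul, qc_neg_one h4]; ring
    have hrest : ∑ x ∈ (univ.erase (0:ZMod p)).erase d, (1 + χ x) * (1 + χ (x - d))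
        = ∑ x ∈ (univ.erase (0:ZMod p)).erase d,
          (if IsSquare x ∧ IsSquare (x - d) then (4:ℤ) else 0) := by
      apply Finset.sum_congr rfl
      intro x hx
      rw [mem_erase, mem_erase] at hx
      have hx0 : x ≠ 0 := hx.2.1
      have hxd : x - d ≠ 0 := sub_ne_zero_of_ne hx.1
      by_cases h1 : IsSquare x
      · have hv1 : χ x = 1 := (quadraticChar_one_iff_isSquare hx0).mpr h1
        by_cases h2 : IsSquare (x - d)
        · rw [if_pos ⟨h1, h2⟩, hv1, (quadraticChar_one_iff_isSquare hxd).mpr h2]; ring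
        · rw [if_neg (by tauto), hv1, quadraticChar_neg_one_iff_not_isSquare.mpr h2]; ring
      · rw [if_neg (by tauto), quadraticChar_neg_one_iff_not_isSquare.mpr h1]; ring
    rw [e0, ed, hrest, Finset.sum_ite, Finset.sum_const, Finset.sum_const]
    simp only [smul_eq_mul, mul_zero, add_zero, hnegd]
    ring
  rw [hA1] at hA2
  linarith

lemma NPP_odd (h7 : p % 8 = 7) (d : ZMod p) (hd : d ≠ 0) :
    (((univ.erase (0:ZMod p)).erase d).filter
      (fun m => IsSquare m ∧ IsSquare (m - d))).card % 2 = 1 := by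
  have h := card_NPP h7 d hd
  omega

lemma card_NMM_eq (h4 : p % 4 = 3) (d : ZMod p) (hd : d ≠ 0) :
    (((univ.erase (0:ZMod p)).erase d).filter
      (fun m => ¬IsSquare m ∧ ¬IsSquare (m - d))).card
    = (((univ.erase (0:ZMod p)).erase d).filter
      (fun m => IsSquare m ∧ IsSquare (m - d))).card := by
  apply Finset.card_bij (fun a _ => d - a)
  · intro a ha
    rw [mem_filter, mem_erase, mem_erase] at ha ⊢
    obtain ⟨⟨had, ha0, -⟩, hs1, hs2⟩ := ha
    have h1 : IsSquare (d - a) := by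
      rw [show d - a = -(a - d) by ring, neg_isSquare_iff h4 (sub_ne_zero_of_ne had)]
      exact hs2
    have h2 : IsSquare (d - a - d) := by
      rw [show d - a - d = -a by ring, neg_isSquare_iff h4 ha0]
      exact hs1
    exact ⟨⟨by simpa [sub_eq_self] using ha0, by
      intro hcon; exact had (by linear_combination -hcon), mem_univ _⟩, h1, h2⟩
  · intro a ha b hb hab
    have : a = b := by linear_combination -hab
    exact this
  · intro b hb
    refine ⟨d - b, ?_, by ring⟩
    rw [mem_filter, mem_erase, mem_erase] at hb ⊢
    obtain ⟨⟨hbd, hb0, -⟩, hs1, hs2⟩ := hb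
    refine ⟨⟨by simpa [sub_eq_self] using hb0, by
      intro hcon; exact hbd (by linear_combination -hcon), mem_univ _⟩, ?_, ?_⟩
    · rw [show d - b = -(b - d) by ring, neg_isSquare_iff h4 (sub_ne_zero_of_ne hbd)]
      intro hcon; exact hcon hs2
    · rw [show d - b - d = -b by ring, neg_isSquare_iff h4 hb0]
      intro hcon; exact hcon hs1

lemma card_QR_eq (h4 : p % 4 = 3) :
    ((univ.erase (0:ZMod p)).filter (fun x => IsSquare x)).card
    = ((univ.erase (0:ZMod p)).filter (fun x => ¬ IsSquare x)).card := by
  apply Finset.card_bij (fun a _ => -a)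
  · intro a ha
    rw [mem_filter, mem_erase] at ha ⊢
    obtain ⟨⟨ha0, -⟩, hs⟩ := ha
    refine ⟨⟨neg_ne_zero.mpr ha0, mem_univ _⟩, ?_⟩
    rw [neg_isSquare_iff h4 ha0]
    intro hcon; exact hcon hs
  · intro a _ b _ hab
    exact neg_injective hab
  · intro b hb
    refine ⟨-b, ?_, by ring⟩
    rw [mem_filter, mem_erase] at hb ⊢
    obtain ⟨⟨hb0, -⟩, hs⟩ := hb
    exact ⟨⟨neg_ne_zero.mpr hb0, mem_univ _⟩, (neg_isSquare_iff h4 hb0).mpr hs⟩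

lemma card_erase0 : (univ.erase (0:ZMod p)).card = p - 1 := by
  rw [Finset.card_erase_of_mem (mem_univ _), Finset.card_univ, ZMod.card]

lemma card_QR_odd (h7 : p % 8 = 7) :
    ((univ.erase (0:ZMod p)).filter (fun x => IsSquare x)).card % 2 = 1 ∧
    ((univ.erase (0:ZMod p)).filter (fun x => ¬ IsSquare x)).card % 2 = 1 := by
  have h4 : p % 4 = 3 := by omega
  have h1 := card_QR_eq (p := p) h4
  have h2 := Finset.card_filter_add_card_filter_not
    (s := univ.erase (0:ZMod p)) (p := fun x => IsSquare x)
  rw [card_erase0] at h2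
  have hp5 : 5 ≤ p := by omega
  omega

/-- The entry function of the circulant matrix. -/
def fq (p : ℕ) (ω : R4) (x : ZMod p) : R4 :=
  if x = 0 then DualNumber.eps else if IsSquare x then 1 + ω else ω + DualNumber.eps * ω

lemma R4_two : (2 : R4) = 0 := by
  have : ((2:ℕ) : R4) = 0 := by
    refine TrivSqZeroExt.ext ?_ ?_
    · rw [TrivSqZeroExt.fst_natCast]; exact CharP.cast_eq_zero F4 2
    · rw [TrivSqZeroExt.snd_natCast]; rfl
  simpa using this

lemma R4_smul_odd {n : ℕ} (hn : n % 2 = 1) (x : R4) : n • x = x := by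
  have h2 : ((2:ℕ)) • x = 0 := by
    rw [nsmul_eq_mul]; push_cast; rw [R4_two, zero_mul]
  conv_lhs => rw [← Nat.div_add_mod n 2, add_nsmul, mul_comm, mul_smul, h2,
    smul_zero, zero_add, hn, one_smul]

lemma central (h7 : p % 8 = 7)
    (ω : R4) (hω : ω ^ 2 + ω + 1 = 0) (d : ZMod p) :
    ∑ m : ZMod p, fq p ω (m - d) * fq p ω m = if d = 0 then 1 else 0 := by
  have h2 : (2 : R4) = 0 := R4_two
  have hu : (eps : R4) * eps = 0 := DualNumber.eps_mul_eps
  have h4 : p % 4 = 3 := by omega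
  set b : R4 := 1 + ω with hb
  set c : R4 := ω + eps * ω with hc
  have hbb : ∀ x : ZMod p, x ≠ 0 → fq p ω x = if IsSquare x then b else c := by
    intro x hx; rw [fq, if_neg hx]
    split_ifs <;> rfl
  by_cases hd : d = 0
  · rw [if_pos hd]
    subst hd
    simp only [sub_zero]
    rw [← Finset.add_sum_erase _ _ (mem_univ (0:ZMod p))]
    have h00 : fq p ω 0 * fq p ω 0 = 0 := by rw [fq, if_pos rfl]; exact hu
    have hrest : ∑ m ∈ univ.erase (0:ZMod p), fq p ω m * fq p ω m
        = ∑ m ∈ univ.erase (0:ZMod p), (if IsSquare m then b * b else c * c) := by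
      apply Finset.sum_congr rfl
      intro m hm
      rw [mem_erase] at hm
      rw [hbb m hm.1]
      split_ifs <;> rfl
    rw [h00, hrest, Finset.sum_ite, Finset.sum_const, Finset.sum_const,
      R4_smul_odd (card_QR_odd h7).1, R4_smul_odd (card_QR_odd h7).2, zero_add]
    linear_combination 2*hω + (eps*ω^2-1)*h2 + ω^2*hu
  · rw [if_neg hd]
    rw [← Finset.add_sum_erase _ _ (mem_univ (0:ZMod p)),
      ← Finset.add_sum_erase _ _ (mem_erase.mpr ⟨hd, mem_univ d⟩)]
    have hends : fq p ω (0 - d) * fq p ω 0 = fq p ω (-d) * eps := by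
      rw [zero_sub, show fq p ω 0 = eps from if_pos rfl]
    have hends2 : fq p ω (d - d) * fq p ω d = eps * fq p ω d := by
      rw [sub_self, show fq p ω 0 = eps from if_pos rfl]
    have hend : fq p ω (-d) * eps + eps * fq p ω d = eps * b + eps * c := by
      rw [hbb (-d) (neg_ne_zero.mpr hd), hbb d hd]
      by_cases hs : IsSquare d
      · rw [if_pos hs, if_neg (fun h => (neg_isSquare_iff h4 hd).mp h hs)]
        ring
      · rw [if_neg hs, if_pos ((neg_isSquare_iff h4 hd).mpr hs)]
        ring
    have hrest : ∑ m ∈ (univ.erase (0:ZMod p)).erase d, fq p ω (m - d) * fq p ω m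
        = ∑ m ∈ (univ.erase (0:ZMod p)).erase d,
          (if IsSquare m ∧ IsSquare (m - d) then b * b
           else if ¬IsSquare m ∧ ¬IsSquare (m - d) then c * c else b * c) := by
      apply Finset.sum_congr rfl
      intro m hm
      rw [mem_erase, mem_erase] at hm
      rw [hbb m hm.2.1, hbb (m - d) (sub_ne_zero_of_ne hm.1)]
      split_ifs <;> first | tauto | ring
    rw [hends, hends2, ← add_assoc, hend, hrest, Finset.sum_ite, Finset.sum_ite,
      Finset.sum_const, Finset.sum_const, Finset.sum_const]
    have hn1 := NPP_odd h7 d hd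
    have hn2eq : (((univ.erase (0:ZMod p)).erase d).filter
        (fun m => ¬(IsSquare m ∧ IsSquare (m - d)))).filter
        (fun m => ¬IsSquare m ∧ ¬IsSquare (m - d))
        = ((univ.erase (0:ZMod p)).erase d).filter
        (fun m => ¬IsSquare m ∧ ¬IsSquare (m - d)) := by
      rw [Finset.filter_filter]
      apply Finset.filter_congr
      intro x _
      constructor
      · tauto
      · tauto
    have hn2 : ((((univ.erase (0:ZMod p)).erase d).filter
        (fun m => ¬(IsSquare m ∧ IsSquare (m - d)))).filter
        (fun m => ¬IsSquare m ∧ ¬IsSquare (m - d))).card % 2 = 1 := by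
      rw [hn2eq, card_NMM_eq h4 d hd]
      exact hn1
    have hsplit1 := Finset.card_filter_add_card_filter_not
      (s := (univ.erase (0:ZMod p)).erase d)
      (p := fun m => IsSquare m ∧ IsSquare (m - d))
    have hsplit2 := Finset.card_filter_add_card_filter_not
      (s := ((univ.erase (0:ZMod p)).erase d).filter
        (fun m => ¬(IsSquare m ∧ IsSquare (m - d))))
      (p := fun m => ¬IsSquare m ∧ ¬IsSquare (m - d))
    have hTcard : ((univ.erase (0:ZMod p)).erase d).card = p - 2 := by
      rw [Finset.card_erase_of_mem (mem_erase.mpr ⟨hd, mem_univ d⟩), card_erase0]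
      omega
    have hp7 : 7 ≤ p := by
      rcases Nat.lt_or_ge p 7 with h | h
      · interval_cases p <;> omega
      · exact h
    have hn3 : ((((univ.erase (0:ZMod p)).erase d).filter
        (fun m => ¬(IsSquare m ∧ IsSquare (m - d)))).filter
        (fun m => ¬(¬IsSquare m ∧ ¬IsSquare (m - d)))).card % 2 = 1 := by
      omega
    rw [R4_smul_odd hn1, R4_smul_odd hn2, R4_smul_odd hn3]
    linear_combination (3+3*eps)*hω + (-1-eps)*h2 + (ω+ω^2)*hu

end QcircAux

/-- For a prime `p ≡ 7 (mod 8)` and `ω` a root of `x² + x + 1` in `F₄ + u F₄`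
(necessarily `ω ∈ F₄`), the quadratic residue circulant matrix
`Q_p(u, 1 + ω, ω + uω)` satisfies `Q · Qᵀ = I_p`. -/
theorem qcirc_mul_transpose_eq_one_of_mod_eight_eq_seven
    (p : ℕ) [NeZero p] (hp : Nat.Prime p) (h7 : p % 8 = 7)
    (ω : R4) (hω : ω ^ 2 + ω + 1 = 0) :
    Qcirc p (DualNumber.eps : R4) (1 + ω) (ω + DualNumber.eps * ω) *
      (Qcirc p (DualNumber.eps : R4) (1 + ω) (ω + DualNumber.eps * ω))ᵀ = 1 := by
  haveI : Fact (Nat.Prime p) := ⟨hp⟩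
  apply Matrix.ext
  intro i j
  rw [Matrix.mul_apply, Matrix.one_apply]
  have hentry : ∀ k l : ZMod p,
      Qcirc p (DualNumber.eps : R4) (1 + ω) (ω + DualNumber.eps * ω) k l
        = QcircAux.fq p ω (l - k) := fun k l => rfl
  have : ∑ k : ZMod p,
      Qcirc p (DualNumber.eps : R4) (1 + ω) (ω + DualNumber.eps * ω) i k *
        (Qcirc p (DualNumber.eps : R4) (1 + ω) (ω + DualNumber.eps * ω))ᵀ k j
      = ∑ m : ZMod p, QcircAux.fq p ω (m - (i - j)) * QcircAux.fq p ω m := by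
    refine Fintype.sum_equiv (Equiv.subRight j) _ _ ?_
    intro k
    rw [Matrix.transpose_apply, hentry i k, hentry j k]
    show QcircAux.fq p ω (k - i) * QcircAux.fq p ω (k - j)
      = QcircAux.fq p ω ((k - j) - (i - j)) * QcircAux.fq p ω (k - j)
    rw [show (k - j) - (i - j) = k - i by ring]
  rw [this, QcircAux.central h7 ω hω (i - j)]
  by_cases hij : i = j
  · rw [if_pos hij, if_pos (by rw [hij, sub_self])]
  · rw [if_neg hij, if_neg (fun h => hij (by linear_combination h))]

end
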